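/- Let B_J and B̃_J be n×n Jacobi iteration matrices with O ≤ B_J ≤ B̃_J entrywise, and let (B₁,...,B_d) and (B̃₁,...,B̃_d) be their splittings corresponding to the same splitting mask. Then the associated iteration matrices satisfy O ≤ 𝓑_{(d)} ≤ 𝓑̃_{(d)} entrywise, and consequently ρ(𝓑_{(d)}) ≤ ρ(𝓑̃_{(d)}). -/
import Mathlib


open Matrix

/-- A splitting of `B`: nonzero parts summing to `B` with pairwise vanishing
Hadamard products. -/
def IsSplitting {n d : ℕ} (B : Matrix (Fin n) (Fin n) ℝ)
    (Bs : Fin d → Matrix (Fin n) (Fin n) ℝ) : Prop :=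
  (∀ p, Bs p ≠ 0) ∧ (∑ p, Bs p = B) ∧
    ∀ p q, p ≠ q → Matrix.hadamard (Bs p) (Bs q) = 0

/-- Strictly block-lower-triangular part `𝓛` of the splitting scheme. -/
def blockL {n d : ℕ} (Bs : Fin d → Matrix (Fin n) (Fin n) ℝ) :
    Matrix (Fin d × Fin n) (Fin d × Fin n) ℝ :=
  Matrix.of fun pi qj => if qj.1 < pi.1 then Bs qj.1 pi.2 qj.2 else 0

/-- Block-upper-triangular part `𝓤` of the splitting scheme. -/
def blockU {n d : ℕ} (Bs : Fin d → Matrix (Fin n) (Fin n) ℝ) :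
    Matrix (Fin d × Fin n) (Fin d × Fin n) ℝ :=
  Matrix.of fun pi qj => if pi.1 ≤ qj.1 then Bs qj.1 pi.2 qj.2 else 0

/-- The iteration matrix `𝓑 = (𝓘 - 𝓛)⁻¹ 𝓤` of a splitting. -/
noncomputable def iterMat {n d : ℕ} (Bs : Fin d → Matrix (Fin n) (Fin n) ℝ) :
    Matrix (Fin d × Fin n) (Fin d × Fin n) ℝ :=
  (1 - blockL Bs)⁻¹ * blockU Bs

/-- Complexification of the iteration matrix. -/
noncomputable def iterMatC {n d : ℕ} (Bs : Fin d → Matrix (Fin n) (Fin n) ℝ) :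
    Matrix (Fin d × Fin n) (Fin d × Fin n) ℂ :=
  (iterMat Bs).map Complex.ofReal

/-- Spectral radius of a real matrix, via its complexification. -/
noncomputable def specRad {m : Type*} [Fintype m] [DecidableEq m]
    (M : Matrix m m ℝ) : ENNReal :=
  spectralRadius ℂ (M.map Complex.ofReal)

section Aux

variable {m : Type*} [Fintype m] [DecidableEq m]

/-- Entrywise order pair predicate: `0 ≤ A ≤ B`. -/
def Pair (A B : Matrix m m ℝ) : Prop := ∀ x y, 0 ≤ A x y ∧ A x y ≤ B x y

lemma Pair.mul {A A' B B' : Matrix m m ℝ} (hA : Pair A A') (hB : Pair B B') :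
    Pair (A * B) (A' * B') := by
  intro x y
  simp only [Matrix.mul_apply]
  constructor
  · exact Finset.sum_nonneg fun z _ => mul_nonneg (hA x z).1 (hB z y).1
  · refine Finset.sum_le_sum fun z _ => ?_
    exact mul_le_mul (hA x z).2 (hB z y).2 (hB z y).1 ((hA x z).1.trans (hA x z).2)

lemma Pair.one : Pair (1 : Matrix m m ℝ) 1 := by
  intro x y
  rcases eq_or_ne x y with h | h
  · simp [h, Matrix.one_apply]
  · simp [Matrix.one_apply_ne h]

lemma Pair.pow {A B : Matrix m m ℝ} (h : Pair A B) (k : ℕ) : Pair (A ^ k) (B ^ k) := by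
  induction k with
  | zero => simpa using Pair.one
  | succ k ih => rw [pow_succ, pow_succ]; exact ih.mul h

lemma Pair.sum {s : Finset ℕ} {A B : ℕ → Matrix m m ℝ} (h : ∀ k ∈ s, Pair (A k) (B k)) :
    Pair (∑ k ∈ s, A k) (∑ k ∈ s, B k) := by
  intro x y
  simp only [Matrix.sum_apply]
  exact ⟨Finset.sum_nonneg fun k hk => (h k hk x y).1,
    Finset.sum_le_sum fun k hk => (h k hk x y).2⟩

attribute [local instance] Matrix.linftyOpNormedRing Matrix.linftyOpNormedAlgebra

lemma nnnorm_map_le_of_pair {A B : Matrix m m ℝ} (h : Pair A B) :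
    ‖A.map Complex.ofReal‖₊ ≤ ‖B.map Complex.ofReal‖₊ := by
  rw [Matrix.linfty_opNNNorm_def, Matrix.linfty_opNNNorm_def]
  refine Finset.sup_mono_fun fun i _ => Finset.sum_le_sum fun j _ => ?_
  simp only [Matrix.map_apply, Complex.nnnorm_real]
  rw [Real.nnnorm_of_nonneg (h i j).1, Real.nnnorm_of_nonneg ((h i j).1.trans (h i j).2)]
  exact (h i j).2

lemma specRad_mono_of_pair {A B : Matrix m m ℝ} (h : Pair A B) :
    specRad A ≤ specRad B := by
  cases isEmpty_or_nonempty m with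
  | inl hE => rw [Subsingleton.elim A B]
  | inr hN =>
    haveI : CompleteSpace (Matrix m m ℂ) := FiniteDimensional.complete ℂ _
    set A' := A.map Complex.ofReal with hA'
    set B' := B.map Complex.ofReal with hB'
    have hmap : ∀ (C : Matrix m m ℝ) (k : ℕ),
        (C.map Complex.ofReal) ^ k = (C ^ k).map Complex.ofReal := by
      intro C k
      have : C.map Complex.ofReal = Complex.ofRealHom.mapMatrix C := rfl
      rw [this, ← map_pow]
      rfl
    have key : ∀ k : ℕ, ‖A' ^ k‖₊ ≤ ‖B' ^ k‖₊ := by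
      intro k
      rw [hA', hB', hmap, hmap]
      exact nnnorm_map_le_of_pair (h.pow k)
    unfold specRad
    refine ge_of_tendsto
      (spectrum.pow_nnnorm_pow_one_div_tendsto_nhds_spectralRadius B') ?_
    filter_upwards [Filter.eventually_atTop.2 ⟨1, fun k hk => hk⟩] with k hk
    obtain ⟨k, rfl⟩ : ∃ j, k = j + 1 := ⟨k - 1, by omega⟩
    rw [Nat.cast_add, Nat.cast_one]
    calc spectralRadius ℂ A'
        ≤ (‖A' ^ (k + 1)‖₊ : ENNReal) ^ (1 / (k + 1) : ℝ) *
          (‖(1 : Matrix m m ℂ)‖₊ : ENNReal) ^ (1 / (k + 1) : ℝ) :=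
          spectrum.spectralRadius_le_pow_nnnorm_pow_one_div ℂ A' k
      _ = (‖A' ^ (k + 1)‖₊ : ENNReal) ^ (1 / (k + 1) : ℝ) := by
          rw [nnnorm_one]; simp
      _ ≤ (‖B' ^ (k + 1)‖₊ : ENNReal) ^ (1 / (k + 1) : ℝ) :=
          ENNReal.rpow_le_rpow (by exact_mod_cast key (k + 1))
            (one_div_nonneg.2 (by positivity))

end Aux

section Nilpotent

variable {n d : ℕ}

lemma blockL_pow_eq_zero (Bs : Fin d → Matrix (Fin n) (Fin n) ℝ) (k : ℕ) :
    ∀ p q : Fin d × Fin n, (p.1 : ℕ) < (q.1 : ℕ) + k → ((blockL Bs) ^ k) p q = 0 := by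
  induction k with
  | zero =>
    intro p q hpq
    rw [pow_zero]
    exact Matrix.one_apply_ne (by rintro rfl; omega)
  | succ k ih =>
    intro p q hpq
    rw [pow_succ, Matrix.mul_apply]
    refine Finset.sum_eq_zero fun r _ => ?_
    by_cases hr : (q.1 : ℕ) < (r.1 : ℕ)
    · rw [ih p r (by omega), zero_mul]
    · have : blockL Bs r q = 0 := by
        simp only [blockL, Matrix.of_apply]
        rw [if_neg (by exact fun hc => hr (by exact_mod_cast hc))]
      rw [this, mul_zero]

lemma blockL_nilpotent (Bs : Fin d → Matrix (Fin n) (Fin n) ℝ) :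
    (blockL Bs) ^ d = 0 := by
  ext p q
  rw [Matrix.zero_apply]
  have hp := p.1.2
  exact blockL_pow_eq_zero Bs d p q (by omega)

lemma one_sub_blockL_inv (Bs : Fin d → Matrix (Fin n) (Fin n) ℝ) :
    (1 - blockL Bs)⁻¹ = ∑ k ∈ Finset.range d, (blockL Bs) ^ k := by
  apply Matrix.inv_eq_right_inv
  rw [mul_neg_geom_sum, blockL_nilpotent, sub_zero]

end Nilpotent

/-- Monotonicity: if `O ≤ B_J ≤ B̃_J` entrywise and the two splittings come
from the same splitting mask, then the iteration matrices satisfy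
`O ≤ 𝓑 ≤ 𝓑̃` entrywise, and hence `ρ(𝓑) ≤ ρ(𝓑̃)`. -/
theorem monotonicity_of_splittings (n d : ℕ)
    (BJ BtJ : Matrix (Fin n) (Fin n) ℝ)
    (hord : ∀ i j, 0 ≤ BJ i j ∧ BJ i j ≤ BtJ i j)
    (M : Fin d → Matrix (Fin n) (Fin n) ℝ)
    (hMne : ∀ p, M p ≠ 0)
    (hM01 : ∀ p i j, M p i j = 0 ∨ M p i j = 1)
    (hMsum : ∑ p, M p = Matrix.of fun _ _ => (1 : ℝ))
    (Bs Bts : Fin d → Matrix (Fin n) (Fin n) ℝ)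
    (hBs : ∀ p, Bs p = Matrix.hadamard (M p) BJ)
    (hBts : ∀ p, Bts p = Matrix.hadamard (M p) BtJ) :
    (∀ x y, 0 ≤ iterMat Bs x y ∧ iterMat Bs x y ≤ iterMat Bts x y) ∧
      specRad (iterMat Bs) ≤ specRad (iterMat Bts) := by
  have hpart : ∀ (p : Fin d) i j, 0 ≤ Bs p i j ∧ Bs p i j ≤ Bts p i j := by
    intro p i j
    rw [hBs, hBts]
    simp only [Matrix.hadamard_apply]
    have hM : 0 ≤ M p i j := by rcases hM01 p i j with h | h <;> simp [h]
    exact ⟨mul_nonneg hM (hord i j).1, mul_le_mul_of_nonneg_left (hord i j).2 hM⟩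
  have hL : Pair (blockL Bs) (blockL Bts) := by
    intro x y
    simp only [blockL, Matrix.of_apply]
    split
    · exact hpart _ _ _
    · simp
  have hU : Pair (blockU Bs) (blockU Bts) := by
    intro x y
    simp only [blockU, Matrix.of_apply]
    split
    · exact hpart _ _ _
    · simp
  have hS : Pair ((1 - blockL Bs)⁻¹) ((1 - blockL Bts)⁻¹) := by
    rw [one_sub_blockL_inv, one_sub_blockL_inv]
    exact Pair.sum fun k _ => hL.pow k
  have hiter : Pair (iterMat Bs) (iterMat Bts) := by
    unfold iterMat
    exact hS.mul hU
  exact ⟨hiter, specRad_mono_of_pair hiter⟩
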